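/- For the ring R = ℤ[t]/(t²−1) with I = (t−1), the first Ext group Ext¹_R(R/2I, R) is isomorphic as an R-module to R/(2,I) (in particular, as an abelian group it is ℤ/2). -/

import Mathlib

noncomputable section

abbrev R : Type := Polynomial ℤ ⧸ Ideal.span ({Polynomial.X ^ 2 - 1} : Set (Polynomial ℤ))

def t : R := Ideal.Quotient.mk _ Polynomial.X

def I : Ideal R := Ideal.span {t - 1}
def J : Ideal R := Ideal.span {t + 1}


/-- `Ext¹_R(M, N)`, the first Ext group of the `R`-modules `M` and `N`, defined via the
derived-functor `Ext` bifunctor on the category of `R`-modules. -/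
def ext1 (M N : Type) [AddCommGroup M] [Module R M] [AddCommGroup N] [Module R N] :
    ModuleCat R :=
  ((Ext R (ModuleCat R) 1).obj (Opposite.op (ModuleCat.of R M))).obj (ModuleCat.of R N)

/-! ### Auxiliary development -/

namespace Ext1Aux

open CategoryTheory Polynomial

local notation "θ" => (Ideal.Quotient.mk (Ideal.span ({Polynomial.X ^ 2 - 1} : Set (Polynomial ℤ))))

lemma mk_surj : Function.Surjective θ := Ideal.Quotient.mk_surjective

lemma tm_mul_tp : (t - 1) * (t + 1) = 0 := by
  have : θ ((X - 1) * (X + 1)) = 0 := by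
    rw [Ideal.Quotient.eq_zero_iff_mem, Ideal.mem_span_singleton]
    exact ⟨1, by ring⟩
  simpa [t, map_mul, map_sub, map_add, map_one] using this

lemma XmXp : (X^2 - 1 : ℤ[X]) = (X - 1) * (X + 1) := by ring

lemma Xp_ne : (X + 1 : ℤ[X]) ≠ 0 := by
  intro h
  have := Polynomial.natDegree_X_add_C (1 : ℤ)
  rw [map_one] at this
  simp [h] at this

lemma Xm_ne : (X - 1 : ℤ[X]) ≠ 0 := by
  intro h
  have := Polynomial.natDegree_X_sub_C (1 : ℤ)
  rw [map_one] at this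
  simp [h] at this

lemma prime_Xp : Prime (X + 1 : ℤ[X]) := by
  have := Polynomial.prime_X_sub_C (-1 : ℤ)
  simpa [sub_neg_eq_add, map_neg, map_one] using this

lemma not_Xp_dvd_two : ¬ (X + 1 : ℤ[X]) ∣ 2 := by
  intro h
  have h2 : (2 : ℤ[X]) ≠ 0 := by norm_num
  have := Polynomial.natDegree_le_of_dvd h h2
  have h1 : (X + 1 : ℤ[X]).natDegree = 1 := by
    simpa [map_one] using Polynomial.natDegree_X_add_C (1 : ℤ)
  rw [h1] at this
  have : ((2 : ℤ[X])).natDegree = 0 := Polynomial.natDegree_ofNat 2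
  omega

lemma ker_tp {x : R} (h : (t + 1) * x = 0) : ∃ y, x = (t - 1) * y := by
  obtain ⟨f, rfl⟩ := mk_surj x
  have : θ ((X + 1) * f) = 0 := by
    simpa [t, map_mul, map_add, map_one] using h
  rw [Ideal.Quotient.eq_zero_iff_mem, Ideal.mem_span_singleton, XmXp] at this
  obtain ⟨g, hg⟩ := this
  have hf : f = (X - 1) * g := by
    apply mul_left_cancel₀ Xp_ne
    rw [hg]; ring
  exact ⟨θ g, by rw [hf]; simp [t, map_mul, map_sub, map_one]⟩

lemma ker_tm {x : R} (h : (t - 1) * x = 0) : ∃ y, x = (t + 1) * y := by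
  obtain ⟨f, rfl⟩ := mk_surj x
  have : θ ((X - 1) * f) = 0 := by
    simpa [t, map_mul, map_sub, map_one] using h
  rw [Ideal.Quotient.eq_zero_iff_mem, Ideal.mem_span_singleton, XmXp] at this
  obtain ⟨g, hg⟩ := this
  have hf : f = (X + 1) * g := by
    apply mul_left_cancel₀ Xm_ne
    rw [hg]; ring
  exact ⟨θ g, by rw [hf]; simp [t, map_mul, map_add, map_one]⟩

lemma ker_2tm {x : R} (h : 2 * (t - 1) * x = 0) : ∃ y, x = (t + 1) * y := by
  obtain ⟨f, rfl⟩ := mk_surj x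
  have : θ (2 * ((X - 1) * f)) = 0 := by
    have h' : (2 * (t-1)) * (θ f) = 0 := h
    simpa [t, map_mul, map_sub, map_ofNat, map_one, mul_assoc] using h'
  rw [Ideal.Quotient.eq_zero_iff_mem, Ideal.mem_span_singleton, XmXp] at this
  obtain ⟨g, hg⟩ := this
  have h2f : (X + 1 : ℤ[X]) ∣ 2 * f := by
    refine ⟨g, ?_⟩
    apply mul_left_cancel₀ Xm_ne
    rw [show (X - 1) * (2 * f) = 2 * ((X-1) * f) by ring, hg]; ring
  have hdvd : (X + 1 : ℤ[X]) ∣ f := by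
    rcases (prime_Xp.dvd_mul.mp h2f) with h | h
    · exact absurd h not_Xp_dvd_two
    · exact h
  obtain ⟨g', hg'⟩ := hdvd
  exact ⟨θ g', by rw [hg']; simp [t, map_mul, map_add, map_one]⟩

/-- the multipliers in the resolution -/
def c : ℕ → R
  | 0 => 2 * (t - 1)
  | (n+1) => if n % 2 = 0 then t + 1 else t - 1

lemma c_zero : c 0 = 2 * (t - 1) := rfl
lemma c_one : c 1 = t + 1 := rfl

lemma c_mul_succ (n : ℕ) : c n * c (n + 1) = 0 := by
  match n with
  | 0 => show (2 * (t-1)) * (t+1) = 0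
         rw [mul_assoc, tm_mul_tp, mul_zero]
  | (m+1) =>
    show (if m % 2 = 0 then t+1 else t-1) * (if (m+1) % 2 = 0 then t+1 else t-1) = 0
    rcases Nat.even_or_odd m with h | h
    · have h0 : m % 2 = 0 := Nat.even_iff.mp h
      rw [if_pos h0, if_neg (by omega), mul_comm, tm_mul_tp]
    · have h0 : m % 2 = 1 := Nat.odd_iff.mp h
      rw [if_neg (by omega), if_pos (by omega), tm_mul_tp]

lemma range_eq_ker (n : ℕ) :
    LinearMap.range (LinearMap.lsmul R R (c (n+1))) = LinearMap.ker (LinearMap.lsmul R R (c n)) := by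
  ext x
  simp only [LinearMap.mem_range, LinearMap.mem_ker, LinearMap.lsmul_apply, smul_eq_mul]
  constructor
  · rintro ⟨y, rfl⟩
    rw [← mul_assoc, c_mul_succ, zero_mul]
  · intro hx
    match n with
    | 0 =>
      obtain ⟨y, hy⟩ := ker_2tm hx
      exact ⟨y, by show (t+1) * y = x; rw [hy]⟩
    | (m+1) =>
      have hx' : (if m % 2 = 0 then t+1 else t-1) * x = 0 := hx
      rcases Nat.even_or_odd m with h | h
      · have h0 : m % 2 = 0 := Nat.even_iff.mp h
        rw [if_pos h0] at hx'
        obtain ⟨y, hy⟩ := ker_tp hx'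
        refine ⟨y, ?_⟩
        show (if (m+1) % 2 = 0 then t+1 else t-1) * y = x
        rw [if_neg (by omega), ← hy]
      · have h0 : m % 2 = 1 := Nat.odd_iff.mp h
        rw [if_neg (by omega)] at hx'
        obtain ⟨y, hy⟩ := ker_tm hx'
        refine ⟨y, ?_⟩
        show (if (m+1) % 2 = 0 then t+1 else t-1) * y = x
        rw [if_pos (by omega), ← hy]

lemma isIso_desc {M' : ModuleCat R} (S : ShortComplex (ModuleCat R)) (k : S.X₂ ⟶ M')
    (hk : S.f ≫ k = 0) (hsurj : Function.Surjective k)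
    (hker : ∀ w, k w = 0 → ∃ v, S.f v = w) :
    IsIso (S.descOpcycles k hk) := by
  have hp : Function.Surjective (S.pOpcycles) :=
    (ModuleCat.epi_iff_surjective _).mp inferInstance
  have hfac : ∀ w : S.X₂, S.descOpcycles k hk (S.pOpcycles w) = k w := by
    intro w
    exact congr($(S.p_descOpcycles k hk) w)
  have : Epi (S.descOpcycles k hk) := by
    have : Epi k := (ModuleCat.epi_iff_surjective _).mpr hsurj
    rw [← S.p_descOpcycles k hk] at this
    exact epi_of_epi S.pOpcycles (S.descOpcycles k hk)
  have : Mono (S.descOpcycles k hk) := by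
    rw [ModuleCat.mono_iff_injective]
    rw [injective_iff_map_eq_zero]
    intro x hx
    obtain ⟨w, rfl⟩ := hp x
    rw [hfac] at hx
    obtain ⟨v, rfl⟩ := hker w hx
    exact congr($(S.f_pOpcycles) v)
  exact isIso_of_mono_of_epi _

/-- The period-2 free resolution complex of `R ⧸ (2I)`. -/
def Pc : ChainComplex (ModuleCat R) ℕ :=
  ChainComplex.of (fun _ => ModuleCat.of R R)
    (fun n => ModuleCat.ofHom (LinearMap.lsmul R R (c n)))
    (fun n => by
      refine ModuleCat.hom_ext (LinearMap.ext fun (x : R) => ?_)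
      show c n * (c (n+1) * x) = (0 : R)
      rw [← mul_assoc, c_mul_succ, zero_mul])

lemma Pc_d (n : ℕ) : Pc.d (n+1) n = ModuleCat.ofHom (LinearMap.lsmul R R (c n)) := by
  simp [Pc]

lemma twoI_eq : Ideal.span ({2} : Set R) * I = Ideal.span {c 0} := by
  rw [I, Ideal.span_singleton_mul_span_singleton, c_zero]

abbrev M : ModuleCat R := ModuleCat.of R (R ⧸ (Ideal.span ({2} : Set R) * I))

def π0 : Pc.X 0 ⟶ M := ModuleCat.ofHom (Submodule.mkQ _)

lemma d_π0 : Pc.d 1 0 ≫ π0 = 0 := by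
  rw [Pc_d]
  refine ModuleCat.hom_ext (LinearMap.ext fun (x : R) => ?_)
  show Submodule.mkQ _ (c 0 * x) = 0
  rw [Submodule.mkQ_apply, Submodule.Quotient.mk_eq_zero]
  rw [twoI_eq]
  exact Ideal.mem_span_singleton.mpr ⟨x, rfl⟩

def πres : Pc ⟶ (ChainComplex.single₀ (ModuleCat R)).obj M :=
  (Pc.toSingle₀Equiv M).symm ⟨π0, d_π0⟩

lemma Pc_exactAt_succ (n : ℕ) : Pc.ExactAt (n + 1) := by
  rw [HomologicalComplex.exactAt_iff' Pc (n+2) (n+1) n (by simp) (by simp)]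
  rw [ShortComplex.moduleCat_exact_iff_range_eq_ker]
  have h1 : Pc.d (n+2) (n+1) = ModuleCat.ofHom (LinearMap.lsmul R R (c (n+1))) := Pc_d (n+1)
  have h2 : Pc.d (n+1) n = ModuleCat.ofHom (LinearMap.lsmul R R (c n)) := Pc_d n
  show LinearMap.range (Pc.d (n+2) (n+1)).hom = LinearMap.ker (Pc.d (n+1) n).hom
  rw [h1, h2]
  exact range_eq_ker n

instance : QuasiIso πres := by
  rw [quasiIso_iff]
  intro i
  cases i with
  | succ n =>
    rw [quasiIsoAt_iff_exactAt' πres (n+1) (ChainComplex.exactAt_succ_single_obj _ _)]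
    exact Pc_exactAt_succ n
  | zero =>
    rw [ChainComplex.quasiIsoAt₀_iff, ShortComplex.quasiIso_iff_isIso_descOpcycles _
      (Pc.shape 0 0 (by simp)) (by simp; rfl) (by simp; rfl)]
    apply isIso_desc
    · show Function.Surjective (πres.f 0)
      have h0 : πres.f 0 = π0 := ChainComplex.toSingle₀Equiv_symm_apply_f_zero π0 d_π0
      rw [h0]
      exact Submodule.mkQ_surjective _
    · intro w hw
      have h0 : πres.f 0 = π0 := ChainComplex.toSingle₀Equiv_symm_apply_f_zero π0 d_π0
      have hw2 : π0 w = 0 := by rw [← h0]; exact hw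
      have hw' : w ∈ (Ideal.span ({2} : Set R) * I) :=
        (Submodule.Quotient.mk_eq_zero _).mp hw2
      have hw'' : (show R from w) ∈ Ideal.span ({c 0} : Set R) := by
        rw [← twoI_eq]; exact hw'
      obtain ⟨v, hv⟩ := Ideal.mem_span_singleton.mp hw''
      refine ⟨v, ?_⟩
      show Pc.d 1 0 v = w
      rw [Pc_d]
      exact hv.symm

/-- The projective resolution of `R ⧸ 2I`. -/
def PR : ProjectiveResolution M where
  complex := Pc
  projective n := by
    have : Projective (ModuleCat.of R R) := (IsProjective.iff_projective _).mp inferInstance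
    exact this
  π := πres

def Y : ModuleCat R := ModuleCat.of R R
def K : CochainComplex (ModuleCat R) ℕ := Pc.linearYonedaObj R Y
def S : ShortComplex (ModuleCat R) := K.sc' 0 1 2

def ev₁ : ↑S.X₁ → (R →ₗ[R] R) := fun f => f.hom
def ev₂ : ↑S.X₂ → (R →ₗ[R] R) := fun f => f.hom
def ev₃ : ↑S.X₃ → (R →ₗ[R] R) := fun f => f.hom

lemma ev₂_inj : Function.Injective ev₂ := fun _ _ h => ModuleCat.hom_ext h
lemma ev₃_inj : Function.Injective ev₃ := fun _ _ h => ModuleCat.hom_ext h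
lemma ev₃_zero : ev₃ 0 = 0 := rfl

lemma Sf_apply (x : ↑S.X₁) : ev₂ (S.f x) = (ev₁ x).comp (LinearMap.lsmul R R (c 0)) := by
  have hf : S.f = ModuleCat.ofHom (Linear.leftComp R Y (Pc.d 1 0)) :=
    ChainComplex.linearYonedaObj_d Pc R Y 0 1
  rw [hf, Pc_d 0]
  rfl

lemma Sg_apply (f : ↑S.X₂) : ev₃ (S.g f) = (ev₂ f).comp (LinearMap.lsmul R R (c 1)) := by
  have hg : S.g = ModuleCat.ofHom (Linear.leftComp R Y (Pc.d 2 1)) :=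
    ChainComplex.linearYonedaObj_d Pc R Y 1 2
  rw [hg, Pc_d 1]
  rfl

/-- multiplication by `(t-1)*r`, as an element of `S.X₂`. -/
def ψ (r : R) : ↑S.X₂ := ModuleCat.ofHom (LinearMap.lsmul R R ((t - 1) * r) : R →ₗ[R] R)

lemma ev₂_ψ (r : R) : ev₂ (ψ r) = LinearMap.lsmul R R ((t - 1) * r) := rfl

lemma ψ_mem' (r : R) : S.g (ψ r) = 0 := by
  apply ev₃_inj
  rw [Sg_apply, ev₃_zero]
  apply LinearMap.ext
  intro v
  show ((t - 1) * r) * (c 1 * v) = 0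
  rw [c_one]
  linear_combination (r * v) * tm_mul_tp

def Ψ : R →ₗ[R] LinearMap.ker S.g.hom where
  toFun r := ⟨ψ r, LinearMap.mem_ker.mpr (ψ_mem' r)⟩
  map_add' r r' := by
    apply Subtype.ext
    refine ev₂_inj (LinearMap.ext fun v => ?_)
    show ((t-1) * (r + r')) * v = ((t-1)*r) * v + ((t-1)*r') * v
    ring
  map_smul' a r := by
    apply Subtype.ext
    refine ev₂_inj (LinearMap.ext fun v => ?_)
    show ((t-1) * (a * r)) * v = a * (((t-1)*r) * v)
    ring

def Φ : R →ₗ[R] (LinearMap.ker S.g.hom ⧸ LinearMap.range S.moduleCatToCycles) :=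
  (LinearMap.range S.moduleCatToCycles).mkQ.comp Ψ

lemma eq_lsmul (f : R →ₗ[R] R) : f = LinearMap.lsmul R R (f 1) := by
  apply LinearMap.ext
  intro v
  conv_lhs => rw [show v = v • (1:R) by simp]
  rw [map_smul]
  show v * f 1 = f 1 * v
  ring

lemma apply_eq (f : R →ₗ[R] R) (v : R) : f v = f 1 * v := by
  calc f v = f (v * 1) := by rw [mul_one]
    _ = v • f 1 := by rw [← smul_eq_mul, map_smul]
    _ = f 1 * v := by rw [smul_eq_mul]; ring

lemma span_pair_eq : Ideal.span ({2, t+1} : Set R) = Ideal.span ({2, t-1} : Set R) := by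
  apply le_antisymm <;> rw [Ideal.span_le] <;> rintro x (rfl | h)
  · exact Ideal.subset_span (by left; rfl)
  · simp only [Set.mem_singleton_iff] at h
    subst h
    have h2 : (2 : R) ∈ Ideal.span ({2, t-1} : Set R) := Ideal.subset_span (by left; rfl)
    have hm : (t - 1 : R) ∈ Ideal.span ({2, t-1} : Set R) := Ideal.subset_span (by right; rfl)
    have h3 := Ideal.add_mem _ hm h2
    have h4 : t - 1 + 2 = t + 1 := by ring
    rwa [h4] at h3
  · exact Ideal.subset_span (by left; rfl)
  · simp only [Set.mem_singleton_iff] at h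
    subst h
    have h2 : (2 : R) ∈ Ideal.span ({2, t+1} : Set R) := Ideal.subset_span (by left; rfl)
    have hp : (t + 1 : R) ∈ Ideal.span ({2, t+1} : Set R) := Ideal.subset_span (by right; rfl)
    have h3 := Ideal.sub_mem _ hp h2
    have h4 : t + 1 - 2 = t - 1 := by ring
    rwa [h4] at h3

lemma Φ_surj : Function.Surjective Φ := by
  intro q
  obtain ⟨⟨f, hf⟩, rfl⟩ := Submodule.mkQ_surjective _ q
  rw [LinearMap.mem_ker] at hf
  have h1 : (t + 1) * (ev₂ f 1) = 0 := by
    have h0 := congrArg ev₃ hf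
    rw [Sg_apply, ev₃_zero] at h0
    have h2 := LinearMap.congr_fun h0 1
    rw [LinearMap.comp_apply] at h2
    have h3 : (LinearMap.lsmul R R (c 1)) (1:R) = t + 1 := by
      rw [c_one]; show (t+1) * 1 = t + 1; ring
    rw [h3, apply_eq (ev₂ f) (t+1)] at h2
    rw [LinearMap.zero_apply] at h2
    linear_combination h2
  obtain ⟨y, hy⟩ := ker_tp h1
  refine ⟨y, ?_⟩
  show Submodule.Quotient.mk ((Ψ y : LinearMap.ker S.g.hom)) = Submodule.Quotient.mk _
  congr 1
  apply Subtype.ext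
  show ψ y = f
  refine ev₂_inj (LinearMap.ext fun v => ?_)
  rw [show ev₂ (ψ y) v = ((t-1)*y) * v from rfl, apply_eq (ev₂ f) v, hy]

lemma Φ_ker : LinearMap.ker Φ = Ideal.span ({2, t-1} : Set R) := by
  rw [← span_pair_eq]
  ext r
  rw [LinearMap.mem_ker]
  show Submodule.Quotient.mk ((Ψ r : LinearMap.ker S.g.hom)) = 0 ↔ _
  rw [Submodule.Quotient.mk_eq_zero, LinearMap.mem_range]
  constructor
  · rintro ⟨x, hx⟩
    have hx' : S.f x = ψ r := congrArg Subtype.val hx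
    have h0 := congrArg ev₂ hx'
    rw [Sf_apply, ev₂_ψ] at h0
    have h2 := LinearMap.congr_fun h0 1
    rw [LinearMap.comp_apply] at h2
    have h3 : (LinearMap.lsmul R R (c 0)) (1:R) = 2 * (t - 1) := by
      rw [c_zero]; show (2*(t-1)) * 1 = 2*(t-1); ring
    rw [h3] at h2
    rw [apply_eq (ev₁ x) (2*(t-1))] at h2
    have h5 : (LinearMap.lsmul R R ((t-1) * r)) (1:R) = (t - 1) * r := by
      show ((t-1)*r) * 1 = _; ring
    rw [h5] at h2
    have h6 : (t - 1) * (r - 2 * (ev₁ x 1)) = 0 := by linear_combination -h2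
    obtain ⟨y, hy⟩ := ker_tm h6
    rw [Ideal.mem_span_pair]
    exact ⟨ev₁ x 1, y, by linear_combination -hy⟩
  · intro hr
    rw [Ideal.mem_span_pair] at hr
    obtain ⟨a, b, hab⟩ := hr
    refine ⟨(show ↑S.X₁ from ModuleCat.ofHom (LinearMap.lsmul R R a : R →ₗ[R] R)), ?_⟩
    apply Subtype.ext
    show S.f _ = ψ r
    apply ev₂_inj
    rw [Sf_apply, ev₂_ψ]
    apply LinearMap.ext
    intro v
    show a * (c 0 * v) = ((t-1)*r)*v
    rw [c_zero]
    linear_combination ((t-1)*v) * hab - (b*v) * tm_mul_tp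

def concreteEquiv : (R ⧸ Ideal.span ({2, t-1} : Set R)) ≃ₗ[R]
    (LinearMap.ker S.g.hom ⧸ LinearMap.range S.moduleCatToCycles) :=
  (Submodule.quotEquivOfEq _ _ Φ_ker.symm).trans (Φ.quotKerEquivOfSurjective Φ_surj)

/-- The full categorical isomorphism chain. -/
def bigIso : (ext1 (R ⧸ (Ideal.span ({2} : Set R) * I)) R) ≅ S.moduleCatLeftHomologyData.H :=
  (PR.isoExt 1 Y) ≪≫ (K.homologyIsoSc' 0 1 2 (by simp) (by simp)) ≪≫ S.moduleCatHomologyIso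

end Ext1Aux

theorem ext1_RmodTwoI_R :
    Nonempty ((ext1 (R ⧸ (Ideal.span ({2} : Set R) * I)) R) ≃ₗ[R]
      (R ⧸ Ideal.span ({2, t - 1} : Set R))) :=
  ⟨Ext1Aux.bigIso.toLinearEquiv.trans Ext1Aux.concreteEquiv.symm⟩
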